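/- arXiv:1110.2085 — 2 statements merged into one kernel-verified Lean document; each statement's English description precedes it below -/
import Mathlib

section
/- Let V be an n-dimensional real vector space, let X and τ be subspaces of V with X not contained in τ, and let r be an integer with 1 ≤ r ≤ dim X. Then there exists a subspace H of V with dim H = n − r such that H + X = V and H + τ ≠ V. -/
open Module Submodule

/-- Between any `C ≤ W` one can find a submodule of any intermediate dimension. -/
lemma exists_intermediate_submodule (V : Type*) [AddCommGroup V] [Module ℝ V]
    [FiniteDimensional ℝ V] (C W : Submodule ℝ V) (hCW : C ≤ W) :
    ∀ d, Module.finrank ℝ C ≤ d → d ≤ Module.finrank ℝ W →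
      ∃ H : Submodule ℝ V, C ≤ H ∧ H ≤ W ∧ Module.finrank ℝ H = d := by
  intro d hd
  induction d, hd using Nat.le_induction with
  | base => exact fun _ => ⟨C, le_rfl, hCW, rfl⟩
  | succ d hd ih =>
    intro hdW
    obtain ⟨H, hCH, hHW, hH⟩ := ih (le_of_lt (Nat.lt_of_succ_le hdW))
    have hlt : H < W := by
      refine lt_of_le_of_ne hHW ?_
      rintro rfl
      omega
    obtain ⟨x, hxW, hxH⟩ := SetLike.exists_of_lt hlt
    have hx0 : x ≠ 0 := fun h => hxH (h ▸ H.zero_mem)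
    refine ⟨H ⊔ (ℝ ∙ x), le_trans hCH le_sup_left, sup_le hHW (by
      rwa [Submodule.span_singleton_le_iff_mem]), ?_⟩
    have hle : Module.finrank ℝ ↥(H ⊔ (ℝ ∙ x)) ≤ d + 1 := by
      have h1 := Submodule.finrank_sup_add_finrank_inf_eq H (ℝ ∙ x)
      have h2 : Module.finrank ℝ ↥(ℝ ∙ x) = 1 := finrank_span_singleton hx0
      omega
    have hgt : d < Module.finrank ℝ ↥(H ⊔ (ℝ ∙ x)) := by
      have : H < H ⊔ (ℝ ∙ x) := by
        refine lt_of_le_of_ne le_sup_left ?_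
        intro h
        exact hxH (h ▸ Submodule.mem_sup_right (Submodule.mem_span_singleton_self x))
      simpa [hH] using Submodule.finrank_lt_finrank_of_lt this
    omega

/-- Key linear algebra lemma: given subspaces `X ⊄ τ` of an `n`-dimensional real vector
space `V` and `1 ≤ r ≤ dim X`, there is a subspace `H` of dimension `n - r` with
`H + X = V` and `H + τ ≠ V`. -/
theorem exists_complement_subspace (V : Type*) [AddCommGroup V] [Module ℝ V]
    [FiniteDimensional ℝ V] (n : ℕ) (hn : Module.finrank ℝ V = n)
    (X τ : Submodule ℝ V) (hXτ : ¬ X ≤ τ) (r : ℕ) (hr1 : 1 ≤ r)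
    (hr2 : r ≤ Module.finrank ℝ X) :
    ∃ H : Submodule ℝ V, Module.finrank ℝ H = n - r ∧ H ⊔ X = ⊤ ∧ H ⊔ τ ≠ ⊤ := by
  obtain ⟨x, hxX, hxτ⟩ := SetLike.not_le_iff_exists.mp hXτ
  obtain ⟨f, hfx, hfτ⟩ := τ.exists_dual_map_eq_bot_of_notMem hxτ inferInstance
  set W := LinearMap.ker f with hW
  have hτW : τ ≤ W := fun v hv => by
    have : f v ∈ τ.map f := ⟨v, hv, rfl⟩
    rw [hfτ] at this
    simpa [hW] using this
  have hxW : x ∉ W := fun h => hfx (by simpa [hW] using h)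
  -- range f = ⊤
  have hsurj : Function.Surjective f := fun y =>
    ⟨(y / f x) • x, by rw [map_smul, smul_eq_mul]; field_simp⟩
  have hrange : Module.finrank ℝ (LinearMap.range f) = 1 := by
    rw [LinearMap.range_eq_top.mpr hsurj]
    simp
  have hWrank : Module.finrank ℝ W = n - 1 ∧ 1 ≤ n := by
    have h0 := LinearMap.finrank_range_add_finrank_ker f
    rw [← hW] at h0
    rw [hrange, hn] at h0
    omega
  have hXn : Module.finrank ℝ X ≤ n := hn ▸ X.finrank_le
  -- W ⊔ X = ⊤
  have hWX : W ⊔ X = ⊤ := by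
    apply Submodule.eq_top_of_finrank_eq
    rw [hn]
    have hlt : W < W ⊔ X :=
      lt_of_le_of_ne le_sup_left (fun h => hxW (h ▸ Submodule.mem_sup_right hxX))
    have h1 := Submodule.finrank_lt_finrank_of_lt hlt
    have h2 : Module.finrank ℝ ↥(W ⊔ X) ≤ n := hn ▸ (W ⊔ X).finrank_le
    omega
  -- K := W ⊓ X has finrank (finrank X) - 1
  set K := W ⊓ X with hK
  have hKrank : Module.finrank ℝ K + n = Module.finrank ℝ W + Module.finrank ℝ X := by
    have h0 := Submodule.finrank_sup_add_finrank_inf_eq W X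
    rw [hWX, ← hK] at h0
    rw [finrank_top ℝ V, hn] at h0
    omega
  -- complement C of K inside W
  obtain ⟨C', hC'⟩ := Submodule.exists_isCompl (K.comap W.subtype)
  set C := C'.map W.subtype with hC
  have hCle : C ≤ W := by
    rintro v ⟨w, _, rfl⟩; exact w.2
  have hCK : C ⊔ K = W := by
    have : C ⊔ (K.comap W.subtype).map W.subtype = (C' ⊔ K.comap W.subtype).map W.subtype :=
      (Submodule.map_sup _ _ _).symm
    rw [Submodule.map_comap_subtype, inf_eq_right.mpr inf_le_left] at this
    rw [this, sup_comm, hC'.sup_eq_top, Submodule.map_top, Submodule.range_subtype]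
  have hCrank : Module.finrank ℝ C + Module.finrank ℝ K = Module.finrank ℝ W := by
    have h1 := Submodule.finrank_add_eq_of_isCompl hC'.symm.symm
    have h2 : Module.finrank ℝ C = Module.finrank ℝ C' :=
      (LinearEquiv.finrank_eq (C'.equivMapOfInjective W.subtype W.injective_subtype)).symm
    have h3 : Module.finrank ℝ (K.comap W.subtype) = Module.finrank ℝ K :=
      LinearEquiv.finrank_eq (Submodule.comapSubtypeEquivOfLe inf_le_left)
    omega
  have hCX : C ⊔ X = ⊤ := by
    have : C ⊔ X = (C ⊔ K) ⊔ X := by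
      rw [sup_assoc, sup_eq_right.mpr (inf_le_right : K ≤ X)]
    rw [this, hCK, hWX]
  -- finrank C = n - finrank X
  have hCfr : Module.finrank ℝ C + Module.finrank ℝ X = n := by omega
  -- get H between C and W of dimension n - r
  obtain ⟨H, hCH, hHW, hHfr⟩ := exists_intermediate_submodule V C W hCle (n - r)
    (by omega) (by omega)
  refine ⟨H, hHfr, ?_, ?_⟩
  · rw [eq_top_iff, ← hCX]
    exact sup_le (le_trans hCH le_sup_left) le_sup_right
  · intro h
    have : H ⊔ τ ≤ W := sup_le hHW hτW
    rw [h, top_le_iff] at this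
    exact hxW (this ▸ Submodule.mem_top)
end

section
/- Let s ≤ n and let S = ℝ^s × {0} ⊂ ℝ^n. Let f : ℝ^m → ℝ^n be a C¹ map and K ⊂ ℝ^m a compact set such that f is transverse to S at every point of K. Then there exists ε > 0 such that every C¹ map g : ℝ^m → ℝ^n with sup_{x∈K} (‖g(x) − f(x)‖ + ‖Dg_x − Df_x‖) < ε is transverse to S at every point of K. -/
/-- The projection of `ℝⁿ` onto the last `n - s` coordinates. -/
noncomputable def lastCoordsProj (s n : ℕ) (h : s ≤ n) :
    EuclideanSpace ℝ (Fin n) →L[ℝ] EuclideanSpace ℝ (Fin (n - s)) :=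
  LinearMap.toContinuousLinearMap
    { toFun := fun u => WithLp.toLp 2 (fun (j : Fin (n - s)) => u ⟨s + (j : ℕ), by omega⟩)
      map_add' := fun u v => by first | rfl | (ext j; simp)
      map_smul' := fun c u => by first | rfl | (ext j; simp) }

/-- Transversality of a map to `S = ℝˢ × {0} ⊂ ℝⁿ` at `x`: either `g x ∉ S`
(i.e. `π (g x) ≠ 0`) or `D(π ∘ g)ₓ` is surjective, where `π` is the projection
onto the last `n - s` coordinates. -/
def TransverseToSlice {m n : ℕ} (s : ℕ) (hs : s ≤ n)
    (g : EuclideanSpace ℝ (Fin m) → EuclideanSpace ℝ (Fin n))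
    (x : EuclideanSpace ℝ (Fin m)) : Prop :=
  lastCoordsProj s n hs (g x) ≠ 0 ∨
    Function.Surjective (fderiv ℝ (fun z => lastCoordsProj s n hs (g z)) x)


open RealInnerProductSpace

open ContinuousLinearMap in
lemma surjective_of_close {m k : ℕ}
    (A : EuclideanSpace ℝ (Fin m) →L[ℝ] EuclideanSpace ℝ (Fin k))
    (hA : Function.Surjective A) :
    ∃ r > 0, ∀ B : EuclideanSpace ℝ (Fin m) →L[ℝ] EuclideanSpace ℝ (Fin k),
      ‖B - A‖ < r → Function.Surjective B := by
  set E := EuclideanSpace ℝ (Fin m)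
  set F := EuclideanSpace ℝ (Fin k)
  set A' : F →L[ℝ] E := ContinuousLinearMap.adjoint A with hA'
  -- A' is injective
  have hA'inj : Function.Injective A' := by
    intro z w hzw
    obtain ⟨x, hx⟩ := hA (z - w)
    have h1 : (inner (𝕜 := ℝ) (z - w) (z - w)) = (inner (𝕜 := ℝ) (A' (z - w)) (x)) := by
      rw [ContinuousLinearMap.adjoint_inner_left, hx]
    rw [map_sub, hzw, sub_self] at h1
    exact sub_eq_zero.mp (inner_self_eq_zero.mp (h1.trans (inner_zero_left x)))
  -- A ∘ A' is injective, hence bijective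
  have hinj : Function.Injective (A.comp A') := by
    intro z w hzw
    apply hA'inj
    have h2 : (inner (𝕜 := ℝ) (A' (z - w)) (A' (z - w))) = 0 := by
      conv_lhs => rw [hA', ContinuousLinearMap.adjoint_inner_left]
      have h3 : A (A' (z - w)) = 0 := by
        have := sub_eq_zero.mpr hzw
        simpa [ContinuousLinearMap.comp_apply, map_sub] using this
      rw [h3, inner_zero_right]
    rw [inner_self_eq_zero] at h2
    simpa [map_sub, sub_eq_zero] using h2
  have hbij : Function.Bijective (A.comp A') :=
    ⟨hinj, (LinearMap.injective_iff_surjective (f := (A.comp A').toLinearMap)).mp hinj⟩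
  let e : F ≃ₗ[ℝ] F := LinearEquiv.ofBijective (A.comp A').toLinearMap hbij
  let e' : F ≃L[ℝ] F := e.toContinuousLinearEquiv
  have hmem : (A.comp A') ∈ Set.range ((↑) : (F ≃L[ℝ] F) → F →L[ℝ] F) :=
    ⟨e', by ext x; rfl⟩
  obtain ⟨r, hr, hball⟩ := Metric.isOpen_iff.1 (ContinuousLinearEquiv.isOpen (𝕜 := ℝ)) _ hmem
  refine ⟨r / (‖A'‖ + 1), by positivity, fun B hB => ?_⟩
  have hclose : B.comp A' ∈ Metric.ball (A.comp A') r := by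
    rw [Metric.mem_ball, dist_eq_norm, ← ContinuousLinearMap.sub_comp]
    calc ‖(B - A).comp A'‖ ≤ ‖B - A‖ * ‖A'‖ := ContinuousLinearMap.opNorm_comp_le _ _
      _ < (r / (‖A'‖ + 1)) * (‖A'‖ + 1) := by
          apply mul_lt_mul' (le_of_lt hB) (by linarith [norm_nonneg A']) (norm_nonneg A')
          · positivity
      _ = r := by field_simp
  obtain ⟨e2, he2⟩ := hball hclose
  intro y
  refine ⟨A' (e2.symm y), ?_⟩
  have : (e2 : F →L[ℝ] F) (e2.symm y) = y := e2.apply_symm_apply y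
  rw [he2] at this
  exact this

lemma lastCoordsProj_def (s n : ℕ) (h : s ≤ n) (u : EuclideanSpace ℝ (Fin n))
    (j : Fin (n - s)) : lastCoordsProj s n h u j = u ⟨s + (j : ℕ), by omega⟩ := rfl

lemma norm_lastCoordsProj_apply_le (s n : ℕ) (h : s ≤ n) (u : EuclideanSpace ℝ (Fin n)) :
    ‖lastCoordsProj s n h u‖ ≤ ‖u‖ := by
  rw [EuclideanSpace.norm_eq, EuclideanSpace.norm_eq]
  apply Real.sqrt_le_sqrt
  have hinj : Function.Injective (fun j : Fin (n - s) => (⟨s + (j : ℕ), by omega⟩ : Fin n)) := by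
    intro a b hab
    simpa [Fin.ext_iff] using hab
  calc ∑ j : Fin (n - s), ‖lastCoordsProj s n h u j‖ ^ 2
      = ∑ i ∈ Finset.univ.image (fun j : Fin (n - s) => (⟨s + (j : ℕ), by omega⟩ : Fin n)),
        ‖u i‖ ^ 2 := by
        rw [Finset.sum_image (fun a _ b _ hab => hinj hab)]
        rfl
    _ ≤ ∑ i : Fin n, ‖u i‖ ^ 2 := Finset.sum_le_sum_of_subset_of_nonneg
        (Finset.subset_univ _) (fun i _ _ => by positivity)

set_option maxHeartbeats 1000000 in
/-- Transversality to the linear slice `ℝˢ × {0}` on a compact set is stable under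
`C¹`-small perturbations. -/
theorem transverse_open_on_compact {m n s : ℕ} (hs : s ≤ n)
    (f : EuclideanSpace ℝ (Fin m) → EuclideanSpace ℝ (Fin n)) (hf : ContDiff ℝ 1 f)
    (K : Set (EuclideanSpace ℝ (Fin m))) (hK : IsCompact K)
    (htrans : ∀ x ∈ K, TransverseToSlice s hs f x) :
    ∃ ε > 0, ∀ g : EuclideanSpace ℝ (Fin m) → EuclideanSpace ℝ (Fin n),
      ContDiff ℝ 1 g →
      (∀ x ∈ K, ‖g x - f x‖ + ‖fderiv ℝ g x - fderiv ℝ f x‖ < ε) →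
      ∀ x ∈ K, TransverseToSlice s hs g x := by
  set π := lastCoordsProj s n hs with hπdef
  have hπle : ∀ u, ‖π u‖ ≤ ‖u‖ := norm_lastCoordsProj_apply_le s n hs
  have hfd : ∀ (g : EuclideanSpace ℝ (Fin m) → EuclideanSpace ℝ (Fin n)),
      ContDiff ℝ 1 g → ∀ y, fderiv ℝ (fun z => π (g z)) y = π.comp (fderiv ℝ g y) :=
    fun g hg y => (π.hasFDerivAt.comp y ((hg.differentiable one_ne_zero) y).hasFDerivAt).fderiv
  have key : ∀ x₀ : EuclideanSpace ℝ (Fin m), ∃ ε > 0, ∃ U : Set (EuclideanSpace ℝ (Fin m)),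
      IsOpen U ∧ x₀ ∈ U ∧ ∀ g, ContDiff ℝ 1 g →
        ∀ y ∈ U ∩ K, ‖g y - f y‖ + ‖fderiv ℝ g y - fderiv ℝ f y‖ < ε →
          TransverseToSlice s hs g y := by
    intro x₀
    by_cases hx₀ : x₀ ∈ K
    · have ht := htrans x₀ hx₀
      unfold TransverseToSlice at ht
      rcases ht with h | h
      · -- the value case
        have hcpos : (0:ℝ) < ‖π (f x₀)‖ := norm_pos_iff.mpr h
        refine ⟨‖π (f x₀)‖/2, by positivity, {y | ‖π (f x₀)‖/2 < ‖π (f y)‖}, ?_, ?_, ?_⟩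
        · exact isOpen_lt continuous_const ((π.continuous.comp hf.continuous).norm)
        · simpa using half_lt_self hcpos
        · rintro g hg y ⟨hyU, hyK⟩ hbound
          refine Or.inl fun h0 => ?_
          have h1 : ‖g y - f y‖ < ‖π (f x₀)‖/2 :=
            lt_of_le_of_lt (le_add_of_nonneg_right (norm_nonneg _)) hbound
          have h2 : ‖π (f y)‖ ≤ ‖g y - f y‖ := by
            calc ‖π (f y)‖ = ‖π (f y - g y)‖ := by rw [map_sub, h0, sub_zero]
              _ ≤ ‖f y - g y‖ := hπle _
              _ = ‖g y - f y‖ := norm_sub_rev _ _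
          have h3 : ‖π (f x₀)‖/2 < ‖π (f y)‖ := hyU
          linarith
      · -- the derivative case
        rw [hfd f hf x₀] at h
        obtain ⟨r, hr, hsurj⟩ := surjective_of_close _ h
        have hcont : Continuous (fun y => π.comp (fderiv ℝ f y)) :=
          (ContinuousLinearMap.compL ℝ (EuclideanSpace ℝ (Fin m)) (EuclideanSpace ℝ (Fin n))
            (EuclideanSpace ℝ (Fin (n - s))) π).continuous.comp (hf.continuous_fderiv one_ne_zero)
        refine ⟨r/2, by positivity,
          {y | ‖π.comp (fderiv ℝ f y) - π.comp (fderiv ℝ f x₀)‖ < r/2}, ?_, ?_, ?_⟩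
        · exact isOpen_lt ((hcont.sub continuous_const).norm) continuous_const
        · show ‖π.comp (fderiv ℝ f x₀) - π.comp (fderiv ℝ f x₀)‖ < r/2
          simpa using by positivity
        · rintro g hg y ⟨hyU, hyK⟩ hbound
          refine Or.inr ?_
          rw [hfd g hg y]
          apply hsurj
          have h1 : ‖fderiv ℝ g y - fderiv ℝ f y‖ < r/2 :=
            lt_of_le_of_lt (le_add_of_nonneg_left (norm_nonneg _)) hbound
          have h2 : ‖π.comp (fderiv ℝ g y) - π.comp (fderiv ℝ f y)‖
              ≤ ‖fderiv ℝ g y - fderiv ℝ f y‖ := by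
            rw [← ContinuousLinearMap.comp_sub]
            refine ContinuousLinearMap.opNorm_le_bound _ (norm_nonneg _) fun u => ?_
            rw [ContinuousLinearMap.comp_apply]
            exact (hπle _).trans (ContinuousLinearMap.le_opNorm _ _)
          have h3 : ‖π.comp (fderiv ℝ f y) - π.comp (fderiv ℝ f x₀)‖ < r/2 := hyU
          calc ‖π.comp (fderiv ℝ g y) - π.comp (fderiv ℝ f x₀)‖
              ≤ ‖π.comp (fderiv ℝ g y) - π.comp (fderiv ℝ f y)‖
                + ‖π.comp (fderiv ℝ f y) - π.comp (fderiv ℝ f x₀)‖ :=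
                by simpa [dist_eq_norm] using
                  dist_triangle (π.comp (fderiv ℝ g y)) (π.comp (fderiv ℝ f y))
                    (π.comp (fderiv ℝ f x₀))
            _ < r/2 + r/2 := by linarith
            _ = r := by ring
    · exact ⟨1, one_pos, Kᶜ, hK.isClosed.isOpen_compl, hx₀,
        fun g hg y hy hb => absurd hy.2 hy.1⟩
  choose ε hε U hUopen hmem hloc using key
  obtain ⟨t, htK, hcover⟩ := hK.elim_nhds_subcover U (fun x _ => (hUopen x).mem_nhds (hmem x))
  rcases t.eq_empty_or_nonempty with hte | hne
  · refine ⟨1, one_pos, fun g hg hb x hx => absurd (hcover hx) (by simp [hte])⟩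
  · refine ⟨t.inf' hne ε, (Finset.lt_inf'_iff hne).mpr fun b _ => hε b, fun g hg hb x hx => ?_⟩
    obtain ⟨x₀, hx₀t, hxU⟩ : ∃ x₀ ∈ t, x ∈ U x₀ := by simpa using hcover hx
    exact hloc x₀ g hg x ⟨hxU, hx⟩ ((hb x hx).trans_le (Finset.inf'_le ε hx₀t))
end
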